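/- Let G be a finite abelian group, D ⊆ G a subset of cardinality n, b ∈ G, and 1 ≤ k ≤ n. Let N(k,b,D) be the number of k-element subsets T ⊆ D with ∑_{x∈T} x = b. Then k! · N(k,b,D) = |G|^{-1} · (n)_k + |G|^{-1} · ∑_{χ ≠ χ_0} χ^{-1}(b) · ∑_{x ∈ X̄} ∏_{i=1}^k χ(x_i), where (n)_k = n(n-1)···(n-k+1) and X̄ is the set of k-tuples of pairwise distinct elements of D. -/

import Mathlib

open Finset

open scoped Classical in
private lemma cardInj {G : Type*} [AddCommGroup G] [Fintype G] (k : ℕ) (D : Finset G) :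
    ((Fintype.piFinset fun _ : Fin k => D).filter (fun x => Function.Injective x)).card
      = D.card.descFactorial k := by
  have e : {x // x ∈ (Fintype.piFinset fun _ : Fin k => D).filter
      (fun x => Function.Injective x)} ≃ (Fin k ↪ {g // g ∈ D}) :=
    { toFun := fun x => ⟨fun i => ⟨x.1 i, by
        have := (Finset.mem_filter.mp x.2).1
        exact (Fintype.mem_piFinset.mp this) i⟩,
        fun i j h => (Finset.mem_filter.mp x.2).2 (Subtype.ext_iff.mp h)⟩
      invFun := fun f => ⟨fun i => (f i).1, by
        refine Finset.mem_filter.mpr ⟨Fintype.mem_piFinset.mpr fun i => (f i).2, ?_⟩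
        intro i j h
        exact f.injective (Subtype.ext h)⟩
      left_inv := fun x => rfl
      right_inv := fun f => rfl }
  calc ((Fintype.piFinset fun _ : Fin k => D).filter (fun x => Function.Injective x)).card
      = Fintype.card {x // x ∈ (Fintype.piFinset fun _ : Fin k => D).filter
          (fun x => Function.Injective x)} := (Fintype.card_coe _).symm
    _ = Fintype.card (Fin k ↪ {g // g ∈ D}) := Fintype.card_congr e
    _ = (Fintype.card {g // g ∈ D}).descFactorial (Fintype.card (Fin k)) :=
        Fintype.card_embedding_eq
    _ = D.card.descFactorial k := by rw [Fintype.card_coe, Fintype.card_fin]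

open scoped Classical in
private lemma fiber_eq {G : Type*} [AddCommGroup G] [Fintype G] (k : ℕ) (D T : Finset G)
    (hT : T ⊆ D) (hTk : T.card = k) :
    ((Fintype.piFinset fun _ : Fin k => D).filter
        (fun x => Function.Injective x)).filter (fun x => Finset.image x Finset.univ = T)
      = (Fintype.piFinset fun _ : Fin k => T).filter (fun x => Function.Injective x) := by
  ext x
  simp only [Finset.mem_filter, Fintype.mem_piFinset]
  constructor
  · rintro ⟨⟨hD, hinj⟩, him⟩
    exact ⟨fun i => him ▸ Finset.mem_image_of_mem x (Finset.mem_univ i), hinj⟩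
  · rintro ⟨hTm, hinj⟩
    refine ⟨⟨fun i => hT (hTm i), hinj⟩, ?_⟩
    apply Finset.eq_of_subset_of_card_le
    · intro g hg
      obtain ⟨i, _, rfl⟩ := Finset.mem_image.mp hg
      exact hTm i
    · rw [hTk, Finset.card_image_of_injective _ hinj, Finset.card_univ, Fintype.card_fin]

private lemma addChar_map_sum {G : Type*} [AddCommGroup G] (χ : AddChar G ℂ) {ι : Type*}
    (s : Finset ι) (f : ι → G) : χ (∑ i ∈ s, f i) = ∏ i ∈ s, χ (f i) := by
  induction s using Finset.cons_induction with
  | empty => simp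
  | cons a s ha ih => rw [Finset.sum_cons, Finset.prod_cons, AddChar.map_add_eq_mul, ih]

open scoped Classical in
/-- Character-sum expression for the subset-sum count: for a finite abelian group `G`,
`D ⊆ G` with `|D| = n`, `b ∈ G` and `1 ≤ k ≤ n`, letting `N(k,b,D)` be the number of
`k`-subsets of `D` summing to `b`,
`k! N(k,b,D) = |G|⁻¹ (n)_k + |G|⁻¹ ∑_{χ ≠ χ₀} χ⁻¹(b) ∑_{x ∈ X̄} ∏_i χ(x_i)`,
where `(n)_k` is the falling factorial and `X̄` is the set of `k`-tuples of pairwise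
distinct elements of `D`. -/
theorem stmt8 {G : Type*} [AddCommGroup G] [Fintype G]
    (D : Finset G) (b : G) (k : ℕ) (hk1 : 1 ≤ k) (hk2 : k ≤ D.card) :
    (Nat.factorial k : ℂ) *
        (((D.powersetCard k).filter fun T => T.sum id = b).card : ℂ) =
      (Fintype.card G : ℂ)⁻¹ * (D.card.descFactorial k : ℂ) +
        (Fintype.card G : ℂ)⁻¹ *
          ∑ χ ∈ Finset.univ.filter (fun χ : AddChar G ℂ => χ ≠ 1),
            χ (-b) *
              ∑ x ∈ (Fintype.piFinset fun _ : Fin k => D).filter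
                  (fun x => Function.Injective x),
                ∏ i, χ (x i) := by
  set X := (Fintype.piFinset fun _ : Fin k => D).filter (fun x => Function.Injective x) with hX
  set Y := X.filter (fun x => ∑ i, x i = b) with hY
  have hGne : (Fintype.card G : ℂ) ≠ 0 := by
    exact_mod_cast Fintype.card_ne_zero
  -- combine the trivial character term with the rest
  have step1 : (Fintype.card G : ℂ)⁻¹ * (D.card.descFactorial k : ℂ) +
        (Fintype.card G : ℂ)⁻¹ *
          ∑ χ ∈ Finset.univ.filter (fun χ : AddChar G ℂ => χ ≠ 1),
            χ (-b) * ∑ x ∈ X, ∏ i, χ (x i)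
      = (Fintype.card G : ℂ)⁻¹ *
          ∑ χ : AddChar G ℂ, χ (-b) * ∑ x ∈ X, ∏ i, χ (x i) := by
    rw [← mul_add]
    congr 1
    have h1 : ((1 : AddChar G ℂ)) (-b) * ∑ x ∈ X, ∏ i, (1 : AddChar G ℂ) (x i)
        = (D.card.descFactorial k : ℂ) := by
      simp only [AddChar.one_apply, one_mul, Finset.prod_const_one]
      rw [Finset.sum_const, nsmul_eq_mul, mul_one, ← cardInj k D, hX]
    rw [Finset.filter_ne' Finset.univ (1 : AddChar G ℂ), ← h1]
    exact Finset.add_sum_erase Finset.univ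
      (fun χ : AddChar G ℂ => χ (-b) * ∑ x ∈ X, ∏ i, χ (x i)) (Finset.mem_univ 1)
  rw [step1]
  -- swap sums and use orthogonality
  have step2 : ∑ χ : AddChar G ℂ, χ (-b) * ∑ x ∈ X, ∏ i, χ (x i)
      = (Fintype.card G : ℂ) * (Y.card : ℂ) := by
    have : ∀ χ : AddChar G ℂ, χ (-b) * ∑ x ∈ X, ∏ i, χ (x i)
        = ∑ x ∈ X, χ ((∑ i, x i) - b) := by
      intro χ
      rw [Finset.mul_sum]
      refine Finset.sum_congr rfl fun x _ => ?_
      rw [sub_eq_add_neg, AddChar.map_add_eq_mul, mul_comm]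
      congr 1
      exact (addChar_map_sum χ _ _).symm
    simp only [this]
    rw [Finset.sum_comm]
    have : ∀ x : Fin k → G, ∑ χ : AddChar G ℂ, χ ((∑ i, x i) - b)
        = if (∑ i, x i) - b = 0 then (Fintype.card G : ℂ) else 0 :=
      fun x => AddChar.sum_apply_eq_ite _
    simp only [this, sub_eq_zero]
    rw [← Finset.sum_filter, Finset.sum_const, nsmul_eq_mul, ← hY, mul_comm]
  rw [step2, ← mul_assoc, inv_mul_cancel₀ hGne, one_mul]
  -- count injective tuples summing to b, fiberwise over their image
  have hYcard : Y.card = (((D.powersetCard k).filter fun T => T.sum id = b).card) * k.factorial := by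
    rw [Finset.card_eq_sum_card_fiberwise
      (f := fun x : Fin k → G => Finset.image x Finset.univ)
      (t := (D.powersetCard k).filter fun T => T.sum id = b) ?_]
    · rw [Finset.sum_congr rfl ?_, Finset.sum_const, smul_eq_mul]
      intro T hT
      rw [Finset.mem_filter, Finset.mem_powersetCard] at hT
      obtain ⟨⟨hTD, hTk⟩, hTs⟩ := hT
      have hfib : Y.filter (fun x => Finset.image x Finset.univ = T)
          = X.filter (fun x => Finset.image x Finset.univ = T) := by
        ext x
        simp only [hY, Finset.mem_filter, and_assoc]
        constructor
        · rintro ⟨h1, _, h3⟩; exact ⟨h1, h3⟩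
        · rintro ⟨h1, h3⟩
          refine ⟨h1, ?_, h3⟩
          have hinj : Function.Injective x := (Finset.mem_filter.mp h1).2
          have : ∑ g ∈ Finset.image x Finset.univ, g = ∑ i, x i :=
            Finset.sum_image (fun i _ j _ h => hinj h)
          rw [h3] at this
          rw [← this]
          simpa using hTs
      rw [hfib, fiber_eq k D T hTD hTk, cardInj, hTk, Nat.descFactorial_self]
    · intro x hx
      rw [Finset.mem_coe, hY, Finset.mem_filter] at hx
      obtain ⟨hxX, hxs⟩ := hx
      rw [hX, Finset.mem_filter, Fintype.mem_piFinset] at hxX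
      obtain ⟨hxD, hinj⟩ := hxX
      rw [Finset.mem_coe, Finset.mem_filter, Finset.mem_powersetCard]
      refine ⟨⟨fun g hg => ?_, ?_⟩, ?_⟩
      · obtain ⟨i, _, rfl⟩ := Finset.mem_image.mp hg; exact hxD i
      · rw [Finset.card_image_of_injective _ hinj, Finset.card_univ, Fintype.card_fin]
      · have : ∑ g ∈ Finset.image x Finset.univ, g = ∑ i, x i :=
          Finset.sum_image (fun i _ j _ h => hinj h)
        simpa [id] using this.trans hxs
  rw [hYcard]
  push_cast
  ring
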